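/- Every Jordan higher generalized derivation {f_n} with f_0 = d_0 = I on a semiprime algebra A over a field of characteristic zero is a higher {f_n, d_n}-derivation: f_n(ab) = \sum_{k=0}^{n} f_{n-k}(a) d_k(b) = \sum_{k=0}^{n} d_{n-k}(a) f_k(b) for all a, b and n. -/

import Mathlib

set_option linter.unusedSectionVars false

section Toolkit
variable {A : Type*} [Ring A]

lemma two_smul_cancel (K : Type*) [Field K] [CharZero K] [Module K A] {x : A}
    (h : x + x = 0) : x = 0 := by
  have h2 : (2:K) • x = 0 := by rw [two_smul]; exact h
  have h3 := congrArg (fun y => ((2:K)⁻¹) • y) h2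
  simpa [smul_smul] using h3

variable (hsp : ∀ a : A, (∀ x : A, a * x * a = 0) → a = 0)

include hsp in
lemma sp_flip {a b : A} (h : ∀ x, a * x * b = 0) : ∀ x, b * x * a = 0 := by
  intro x
  apply hsp
  intro y
  have e : b * x * a * y * (b * x * a) = b * x * (a * y * b) * x * a := by noncomm_ring
  rw [e, h y]
  noncomm_ring

include hsp in
lemma sp_sym (K : Type*) [Field K] [CharZero K] [Module K A] {a b : A}
    (h : ∀ x, a * x * b + b * x * a = 0) : ∀ x, a * x * b = 0 := by
  have hrel : ∀ x : A, b * x * a = -(a * x * b) := by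
    intro x; linear_combination (norm := noncomm_ring) h x
  intro x
  apply hsp
  intro y
  have h2 : a * (x * a * y) * b = -(b * (x * a * y) * a) := by
    linear_combination (norm := noncomm_ring) hrel (x * a * y)
  have key : a * x * b * y * (a * x * b) = -(a * x * b * y * (a * x * b)) := by
    calc a * x * b * y * (a * x * b)
        = a * x * (b * y * a) * (x * b) := by noncomm_ring
      _ = a * x * (-(a * y * b)) * (x * b) := by rw [hrel y]
      _ = -((a * (x * a * y) * b) * (x * b)) := by noncomm_ring
      _ = -((-(b * (x * a * y) * a)) * (x * b)) := by rw [← h2]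
      _ = (b * x * a) * y * (a * x * b) := by noncomm_ring
      _ = (-(a * x * b)) * y * (a * x * b) := by rw [hrel x]
      _ = -(a * x * b * y * (a * x * b)) := by noncomm_ring
  apply two_smul_cancel K
  nth_rewrite 2 [key]
  noncomm_ring

include hsp in
lemma sp_central {q : A} (h : ∀ x y : A, q * (x * y - y * x) = (x * y - y * x) * q) :
    ∀ x, q * x = x * q := by
  have g1 : ∀ x y : A, q * ((x * q - q * x) * y) = ((x * q - q * x) * y) * q := by
    intro x y
    linear_combination (norm := noncomm_ring) h x (q * y) - q * (h x y)
  have h1 : ∀ x y : A, (x * q - q * x) * (q * y - y * q) = 0 := by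
    intro x y
    linear_combination (norm := noncomm_ring) - (h x q) * y + g1 x y
  intro x
  have w0 : q * x - x * q = 0 := by
    apply hsp
    intro z
    linear_combination (norm := noncomm_ring) -(h1 x (z * x)) + (h1 x z) * x
  linear_combination (norm := noncomm_ring) w0

end Toolkit
open Polynomial Finset

section SerTools
variable {K A : Type*} [Field K] [CharZero K] [Ring A] [Algebra K A]

/-- truncated series attached to a family of operators -/
noncomputable def Ser (d : ℕ → Module.End K A) (n : ℕ) (a : A) : Polynomial A :=
  ∑ k ∈ Finset.range (n+1), Polynomial.monomial k (d k a)

/-- coefficientwise congruence up to (excluding) N -/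
def MD {R : Type*} [Ring R] (N : ℕ) (p q : Polynomial R) : Prop :=
  ∀ m, m < N → p.coeff m = q.coeff m

namespace MD
variable {R : Type*} [Ring R] {N : ℕ} {p q r s : Polynomial R}

lemma rfl : MD N p p := fun _ _ => _root_.rfl
lemma symm (h : MD N p q) : MD N q p := fun m hm => (h m hm).symm
lemma trans (h1 : MD N p q) (h2 : MD N q r) : MD N p r := fun m hm => (h1 m hm).trans (h2 m hm)
lemma add (h1 : MD N p q) (h2 : MD N r s) : MD N (p + r) (q + s) := by
  intro m hm; simp [Polynomial.coeff_add, h1 m hm, h2 m hm]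
lemma sub (h1 : MD N p q) (h2 : MD N r s) : MD N (p - r) (q - s) := by
  intro m hm; simp [Polynomial.coeff_sub, h1 m hm, h2 m hm]
lemma neg (h1 : MD N p q) : MD N (-p) (-q) := by
  intro m hm; simp [h1 m hm]
lemma mul_right (h : MD N p q) (r : Polynomial R) : MD N (p * r) (q * r) := by
  intro m hm
  rw [Polynomial.coeff_mul, Polynomial.coeff_mul]
  refine Finset.sum_congr _root_.rfl fun ij hij => ?_
  rw [Finset.HasAntidiagonal.mem_antidiagonal] at hij
  rw [h ij.1 (lt_of_le_of_lt (le_trans (Nat.le_add_right _ _) hij.le) hm)]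
lemma mul_left (h : MD N p q) (r : Polynomial R) : MD N (r * p) (r * q) := by
  intro m hm
  rw [Polynomial.coeff_mul, Polynomial.coeff_mul]
  refine Finset.sum_congr _root_.rfl fun ij hij => ?_
  rw [Finset.HasAntidiagonal.mem_antidiagonal] at hij
  rw [h ij.2 (lt_of_le_of_lt (le_trans (Nat.le_add_left _ _) hij.le) hm)]
lemma mul_mul (h1 : MD N p q) (h2 : MD N r s) : MD N (p * r) (q * s) :=
  (h1.mul_right r).trans (h2.mul_left q)
lemma of_eq (h : p = q) : MD N p q := fun m _ => by rw [h]
end MD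

lemma coeff_mul_range {R : Type*} [Ring R] (p q : Polynomial R) (m : ℕ) :
    (p*q).coeff m = ∑ k ∈ range (m+1), p.coeff k * q.coeff (m - k) := by
  rw [Polynomial.coeff_mul]
  exact Finset.Nat.sum_antidiagonal_eq_sum_range_succ (fun i j => p.coeff i * q.coeff j) m

lemma Ser_coeff (d : ℕ → Module.End K A) (n : ℕ) (a : A) (m : ℕ) :
    (Ser d n a).coeff m = if m ≤ n then d m a else 0 := by
  rw [Ser, Polynomial.finset_sum_coeff]
  by_cases h : m ≤ n
  · rw [Finset.sum_eq_single m]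
    · simp [Polynomial.coeff_monomial, h]
    · intro k _ hk; simp [Polynomial.coeff_monomial, hk]
    · intro hm; exact absurd (Finset.mem_range.2 (Nat.lt_succ_of_le h)) hm
  · rw [if_neg h]
    refine Finset.sum_eq_zero fun k hk => ?_
    rw [Finset.mem_range] at hk
    have : k ≠ m := by omega
    simp [Polynomial.coeff_monomial, this]

lemma Ser_coeff_le (d : ℕ → Module.End K A) (n : ℕ) (a : A) {m : ℕ} (h : m ≤ n) :
    (Ser d n a).coeff m = d m a := by rw [Ser_coeff, if_pos h]

lemma Ser_add (d : ℕ → Module.End K A) (n : ℕ) (a b : A) :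
    Ser d n (a + b) = Ser d n a + Ser d n b := by
  rw [Ser, Ser, Ser, ← Finset.sum_add_distrib]
  exact Finset.sum_congr _root_.rfl fun k _ => by rw [map_add, map_add]

lemma SerMul_coeff (u v : ℕ → Module.End K A) (n : ℕ) (a b : A) {m : ℕ} (h : m ≤ n) :
    (Ser u n a * Ser v n b).coeff m = ∑ k ∈ range (m+1), u k a * v (m - k) b := by
  rw [coeff_mul_range]
  refine Finset.sum_congr _root_.rfl fun k hk => ?_
  rw [Finset.mem_range] at hk
  rw [Ser_coeff_le u n a (by omega), Ser_coeff_le v n b (by omega)]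

/-- the reflected version, matching the `∑ f (n-k) a * d k b` shape -/
lemma SerMul_coeff' (u v : ℕ → Module.End K A) (n : ℕ) (a b : A) {m : ℕ} (h : m ≤ n) :
    (Ser u n a * Ser v n b).coeff m = ∑ k ∈ range (m+1), u (m - k) a * v k b := by
  rw [SerMul_coeff u v n a b h]
  conv_rhs => rw [← Finset.sum_range_reflect]
  simp only [Nat.add_sub_cancel]
  refine Finset.sum_congr _root_.rfl fun k hk => ?_
  rw [Finset.mem_range] at hk
  rw [show m - (m - k) = k by omega]

end SerTools

section Chain
variable {A : Type*} [Ring A] (K : Type*) [Field K] [CharZero K] [Module K A]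
variable (hsp : ∀ a : A, (∀ x : A, a * x * a = 0) → a = 0)

-- Brešar linearization chain
include K hsp in
lemma bresar_chain (e : A → A → A)
    (haddl : ∀ a a' b, e (a + a') b = e a b + e a' b)
    (haddr : ∀ a b b', e a (b + b') = e a b + e a b')
    (hkey : ∀ a b x, e a b * x * (a*b - b*a) + (a*b - b*a) * x * e a b = 0) :
    (∀ a b c d x, e a b * x * (c*d - d*c) = 0) ∧
    (∀ a b c d x, (c*d - d*c) * x * e a b = 0) ∧
    (∀ a b y, e a b * y = y * e a b) := by
  -- C1
  have c1 : ∀ a b x, e a b * x * (a*b - b*a) = 0 := by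
    intro a b
    exact sp_sym hsp K (fun x => hkey a b x)
  have c1f : ∀ a b x, (a*b - b*a) * x * e a b = 0 := by
    intro a b
    exact sp_flip hsp (c1 a b)
  -- linearize b → b, d : e a b * x * (a*d - d*a) + e a d * x * (a*b - b*a) = 0
  have lin1 : ∀ a b t x, e a b * x * (a*t - t*a) + e a t * x * (a*b - b*a) = 0 := by
    intro a b t x
    have h := c1 a (b + t) x
    rw [haddr] at h
    have hb := c1 a b x
    have ht := c1 a t x
    linear_combination (norm := noncomm_ring) h - hb - ht
  -- C3 : e a b * x * (a*t - t*a) = 0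
  have c3 : ∀ a b t x, e a b * x * (a*t - t*a) = 0 := by
    intro a b t x
    apply hsp
    intro y
    have h1 : e a b * x * (a*t - t*a) = -(e a t * x * (a*b - b*a)) := by
      linear_combination (norm := noncomm_ring) lin1 a b t x
    calc e a b * x * (a*t - t*a) * y * (e a b * x * (a*t - t*a))
        = (e a b * x * (a*t - t*a)) * y * (e a b * x * (a*t - t*a)) := by noncomm_ring
      _ = (-(e a t * x * (a*b - b*a))) * y * (e a b * x * (a*t - t*a)) := by rw [h1]
      _ = -(e a t * x * ((a*b - b*a) * y * e a b) * x * (a*t - t*a)) := by noncomm_ring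
      _ = 0 := by rw [c1f a b y]; noncomm_ring
  have c3f : ∀ a b t x, (a*t - t*a) * x * e a b = 0 := fun a b t => sp_flip hsp (c3 a b t)
  -- linearize a → a, c
  have lin2 : ∀ a b c t x, e a b * x * (c*t - t*c) + e c b * x * (a*t - t*a) = 0 := by
    intro a b c t x
    have h := c3 (a + c) b t x
    rw [haddl] at h
    have ha := c3 a b t x
    have hc := c3 c b t x
    linear_combination (norm := noncomm_ring) h - ha - hc
  have c4 : ∀ a b c t x, e a b * x * (c*t - t*c) = 0 := by
    intro a b c t x
    apply hsp
    intro y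
    have h1 : e a b * x * (c*t - t*c) = -(e c b * x * (a*t - t*a)) := by
      linear_combination (norm := noncomm_ring) lin2 a b c t x
    calc e a b * x * (c*t - t*c) * y * (e a b * x * (c*t - t*c))
        = (-(e c b * x * (a*t - t*a))) * y * (e a b * x * (c*t - t*c)) := by
          rw [show e a b * x * (c*t - t*c) * y * (e a b * x * (c*t - t*c))
              = (e a b * x * (c*t - t*c)) * y * (e a b * x * (c*t - t*c)) by noncomm_ring, h1]
      _ = -(e c b * x * ((a*t - t*a) * y * e a b) * x * (c*t - t*c)) := by noncomm_ring
      _ = 0 := by rw [c3f a b t y]; noncomm_ring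
  have c4f : ∀ a b c t x, (c*t - t*c) * x * e a b = 0 := fun a b c t => sp_flip hsp (c4 a b c t)
  -- centrality
  have c5 : ∀ a b y, e a b * y = y * e a b := by
    intro a b y
    have w0 : e a b * y - y * e a b = 0 := by
      apply hsp
      intro z
      -- (ey - ye) z (ey - ye) = e(yz)(ey - ye) - y (e z (ey - ye)) = 0
      have t1 : e a b * (y*z) * (e a b * y - y * e a b) = 0 := by
        have := c4 a b (e a b) y (y*z)
        linear_combination (norm := noncomm_ring) this
      have t2 : e a b * z * (e a b * y - y * e a b) = 0 := by
        have := c4 a b (e a b) y z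
        linear_combination (norm := noncomm_ring) this
      linear_combination (norm := noncomm_ring) t1 - y * t2
    linear_combination (norm := noncomm_ring) w0
  exact ⟨c4, c4f, c5⟩

end Chain
section SubD
open Polynomial Finset
variable {K : Type*} {A : Type*} [Field K] [CharZero K] [Ring A] [Algebra K A]

lemma MD.half (K : Type*) [Field K] [CharZero K] {A : Type*} [Ring A] [Module K A]
    {N : ℕ} {p q : Polynomial A} (h : MD N (p + p) (q + q)) : MD N p q := by
  intro m hm
  have h1 := h m hm
  rw [Polynomial.coeff_add, Polynomial.coeff_add] at h1
  have h2 : (p.coeff m - q.coeff m) + (p.coeff m - q.coeff m) = 0 := by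
    rw [sub_add_sub_comm, h1, sub_self]
  exact sub_eq_zero.mp (two_smul_cancel K h2)

variable (d : ℕ → Module.End K A) (n : ℕ)

section D12
variable (hJP : ∀ a b : A, MD (n+1) (Ser d n (a*b + b*a))
    (Ser d n a * Ser d n b + Ser d n b * Ser d n a))

include hJP in
lemma D1 (u x : A) : MD (n+1) (Ser d n (u*x*u)) (Ser d n u * Ser d n x * Ser d n u) := by
  have s2 := hJP u x
  have s3 := hJP u u
  have s4 := hJP (u*u) x
  have s1 := hJP (u*x + x*u) u
  have e3 : Ser d n (u*u + u*u) = Ser d n (u*u) + Ser d n (u*u) := Ser_add d n _ _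
  rw [e3] at s3
  have s5 : MD (n+1) (Ser d n (u*u)) (Ser d n u * Ser d n u) := MD.half K s3
  have hA : ((u*x + x*u)*u + u*(u*x + x*u)) = ((u*u*x + x*(u*u)) + (u*x*u + u*x*u)) := by
    noncomm_ring
  have sL : Ser d n ((u*x + x*u)*u + u*(u*x + x*u))
      = Ser d n (u*u*x + x*(u*u)) + (Ser d n (u*x*u) + Ser d n (u*x*u)) := by
    rw [hA, Ser_add d n (u*u*x + x*(u*u)) (u*x*u + u*x*u), Ser_add d n (u*x*u) (u*x*u)]
  have main : MD (n+1) (Ser d n (u*x*u) + Ser d n (u*x*u))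
      (Ser d n u * Ser d n x * Ser d n u + Ser d n u * Ser d n x * Ser d n u) := by
    have e : Ser d n (u*x*u) + Ser d n (u*x*u)
        = Ser d n ((u*x + x*u)*u + u*(u*x + x*u)) - Ser d n (u*u*x + x*(u*u)) := by
      rw [sL]; abel
    rw [e]
    have t1 := MD.sub s1 s4
    refine t1.trans ?_
    have t2 := MD.sub (MD.add (s2.mul_right (Ser d n u)) (s2.mul_left (Ser d n u)))
      (MD.add (s5.mul_right (Ser d n x)) (s5.mul_left (Ser d n x)))
    refine t2.trans (MD.of_eq ?_)
    noncomm_ring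
  exact MD.half K main

include hJP in
lemma D2 (u w x : A) : MD (n+1) (Ser d n (u*x*w + w*x*u))
    (Ser d n u * Ser d n x * Ser d n w + Ser d n w * Ser d n x * Ser d n u) := by
  have h1 := D1 d n hJP (u+w) x
  have hA : (u+w)*x*(u+w) = u*x*u + (u*x*w + w*x*u) + w*x*w := by noncomm_ring
  have sL : Ser d n ((u+w)*x*(u+w))
      = Ser d n (u*x*u) + Ser d n (u*x*w + w*x*u) + Ser d n (w*x*w) := by
    rw [hA, Ser_add d n (u*x*u + (u*x*w + w*x*u)) (w*x*w),
      Ser_add d n (u*x*u) (u*x*w + w*x*u)]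
  have sR : Ser d n (u+w) = Ser d n u + Ser d n w := Ser_add d n u w
  rw [sL, sR] at h1
  have e : Ser d n (u*x*w + w*x*u)
      = (Ser d n (u*x*u) + Ser d n (u*x*w + w*x*u) + Ser d n (w*x*w))
        - Ser d n (u*x*u) - Ser d n (w*x*w) := by abel
  rw [e]
  have t1 := MD.sub (MD.sub h1 (D1 d n hJP u x)) (D1 d n hJP w x)
  refine t1.trans (MD.of_eq ?_)
  noncomm_ring

end D12
end SubD
section SubD2
open Polynomial Finset
variable {K : Type*} {A : Type*} [Field K] [CharZero K] [Ring A] [Algebra K A]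

lemma sum_reflect' {M : Type*} [AddCommMonoid M] (g : ℕ → ℕ → M) (m : ℕ) :
    ∑ k ∈ range (m+1), g k (m-k) = ∑ k ∈ range (m+1), g (m-k) k := by
  conv_rhs => rw [← Finset.sum_range_reflect]
  simp only [Nat.add_sub_cancel]
  refine Finset.sum_congr rfl fun k hk => ?_
  rw [Finset.mem_range] at hk
  rw [show m - (m - k) = k by omega]

lemma extract_left {A : Type*} [Ring A] {p : Polynomial A} {n : ℕ}
    (hlow : ∀ m, m < n → p.coeff m = 0) (r : Polynomial A) :
    (p * r).coeff n = p.coeff n * r.coeff 0 := by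
  rw [coeff_mul_range]
  rw [Finset.sum_eq_single n (fun k hk hkn => by
    rw [hlow k (by rw [Finset.mem_range] at hk; omega), zero_mul])
    (fun h => absurd (Finset.self_mem_range_succ n) h)]
  rw [Nat.sub_self]

lemma extract_right {A : Type*} [Ring A] {p : Polynomial A} {n : ℕ}
    (hlow : ∀ m, m < n → p.coeff m = 0) (r : Polynomial A) :
    (r * p).coeff n = r.coeff 0 * p.coeff n := by
  rw [coeff_mul_range]
  rw [Finset.sum_eq_single 0 (fun k hk hkn => by
    rw [hlow (n-k) (by rw [Finset.mem_range] at hk; omega), mul_zero])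
    (fun h => absurd (Finset.mem_range.2 (Nat.succ_pos n)) h)]
  rw [Nat.sub_zero]

/-- the defect of the `d`-family at level `n` -/
noncomputable def Edef (d : ℕ → Module.End K A) (n : ℕ) (a b : A) : A :=
  d n (a*b) - ∑ k ∈ Finset.range (n+1), d (n-k) a * d k b

variable (hsp : ∀ a : A, (∀ x : A, a * x * a = 0) → a = 0)
variable (d : ℕ → Module.End K A) (n : ℕ)

include hsp in
lemma subD (hd0' : ∀ a : A, d 0 a = a) (hn : 1 ≤ n)
    (HJ : ∀ m, m ≤ n → ∀ a b : A, d m (a*b + b*a)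
      = ∑ k ∈ range (m+1), (d (m-k) a * d k b + d k b * d (m-k) a))
    (HG : ∀ m, m < n → ∀ a b : A, d m (a*b) = ∑ k ∈ range (m+1), d (m-k) a * d k b) :
    ∀ a b : A, d n (a*b) = ∑ k ∈ range (n+1), d (n-k) a * d k b := by
  have hJP : ∀ a b : A, MD (n+1) (Ser d n (a*b + b*a))
      (Ser d n a * Ser d n b + Ser d n b * Ser d n a) := by
    intro a b m hm
    have hm' : m ≤ n := Nat.lt_succ_iff.mp hm
    rw [Ser_coeff_le d n _ hm', Polynomial.coeff_add,
        SerMul_coeff' d d n a b hm', SerMul_coeff d d n b a hm', HJ m hm' a b,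
        ← Finset.sum_add_distrib]
  have hθ0 : ∀ a : A, (Ser d n a).coeff 0 = a := fun a => by
    rw [Ser_coeff_le d n a (Nat.zero_le n), hd0']
  have hlow : ∀ a b : A, ∀ m, m < n → (Ser d n (a*b) - Ser d n a * Ser d n b).coeff m = 0 := by
    intro a b m hm
    rw [Polynomial.coeff_sub, Ser_coeff_le d n _ (le_of_lt hm),
        SerMul_coeff' d d n a b (le_of_lt hm), HG m hm a b, sub_self]
  have hcoe : ∀ a b : A, (Ser d n (a*b) - Ser d n a * Ser d n b).coeff n = Edef d n a b := by
    intro a b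
    rw [Polynomial.coeff_sub, Ser_coeff_le d n _ le_rfl, SerMul_coeff' d d n a b le_rfl]
    rfl
  -- skew symmetry
  have hskew : ∀ a b : A, Edef d n a b + Edef d n b a = 0 := by
    intro a b
    have h := HJ n le_rfl a b
    rw [map_add] at h
    have href : ∑ k ∈ range (n+1), d (n-k) b * d k a
        = ∑ k ∈ range (n+1), d k b * d (n-k) a :=
      (sum_reflect' (fun k j => d k b * d j a) n).symm
    rw [Edef, Edef]
    rw [Finset.sum_add_distrib] at h
    rw [href]
    linear_combination (norm := noncomm_ring) h
  -- additivity
  have haddl : ∀ a a' b : A, Edef d n (a+a') b = Edef d n a b + Edef d n a' b := by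
    intro a a' b
    rw [Edef, Edef, Edef, add_mul, map_add]
    have : ∀ k ∈ range (n+1), d (n-k) (a + a') * d k b
        = d (n-k) a * d k b + d (n-k) a' * d k b := fun k _ => by rw [map_add, add_mul]
    rw [Finset.sum_congr rfl this, Finset.sum_add_distrib]
    abel
  have haddr : ∀ a b b' : A, Edef d n a (b+b') = Edef d n a b + Edef d n a b' := by
    intro a b b'
    rw [Edef, Edef, Edef, mul_add, map_add]
    have : ∀ k ∈ range (n+1), d (n-k) a * d k (b + b')
        = d (n-k) a * d k b + d (n-k) a * d k b' := fun k _ => by rw [map_add, mul_add]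
    rw [Finset.sum_congr rfl this, Finset.sum_add_distrib]
    abel
  -- the key identity (D3)
  have hkey : ∀ a b x : A,
      Edef d n a b * x * (a*b - b*a) + (a*b - b*a) * x * Edef d n a b = 0 := by
    intro a b x
    have r1 := D2 d n hJP (a*b) (b*a) x
    have q1 : Ser d n ((a*b)*x*(b*a)) = Ser d n (a*(b*x*b)*a) := by
      rw [show (a*b)*x*(b*a) = a*(b*x*b)*a by noncomm_ring]
    have q2 : Ser d n ((b*a)*x*(a*b)) = Ser d n (b*(a*x*a)*b) := by
      rw [show (b*a)*x*(a*b) = b*(a*x*a)*b by noncomm_ring]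
    have r2 : MD (n+1) (Ser d n ((a*b)*x*(b*a)))
        (Ser d n a * (Ser d n b * Ser d n x * Ser d n b) * Ser d n a) := by
      rw [q1]
      refine (D1 d n hJP a (b*x*b)).trans ?_
      exact ((D1 d n hJP b x).mul_left (Ser d n a)).mul_right (Ser d n a)
    have r3 : MD (n+1) (Ser d n ((b*a)*x*(a*b)))
        (Ser d n b * (Ser d n a * Ser d n x * Ser d n a) * Ser d n b) := by
      rw [q2]
      refine (D1 d n hJP b (a*x*a)).trans ?_
      exact ((D1 d n hJP a x).mul_left (Ser d n b)).mul_right (Ser d n b)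
    have sL : Ser d n ((a*b)*x*(b*a) + (b*a)*x*(a*b))
        = Ser d n ((a*b)*x*(b*a)) + Ser d n ((b*a)*x*(a*b)) := Ser_add d n _ _
    -- main : two evaluations agree
    have main : MD (n+1)
        (Ser d n (a*b) * Ser d n x * Ser d n (b*a) + Ser d n (b*a) * Ser d n x * Ser d n (a*b))
        (Ser d n a * (Ser d n b * Ser d n x * Ser d n b) * Ser d n a
          + Ser d n b * (Ser d n a * Ser d n x * Ser d n a) * Ser d n b) := by
    -- r1.symm : MD RHS-main LHS-series ; then sL splits ; then r2, r3
      refine r1.symm.trans ?_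
      rw [sL]
      exact MD.add r2 r3
    -- substitute θ(ab) = θaθb + p, θ(ba) = θbθa + p'
    have hp : Ser d n (a*b) = Ser d n a * Ser d n b
        + (Ser d n (a*b) - Ser d n a * Ser d n b) := by abel
    have hp' : Ser d n (b*a) = Ser d n b * Ser d n a
        + (Ser d n (b*a) - Ser d n b * Ser d n a) := by abel
    rw [hp, hp'] at main
    -- junk := expanded - main RHS ; MD junk 0
    have junk : MD (n+1)
        ((Ser d n (a*b) - Ser d n a * Ser d n b) * (Ser d n x * (Ser d n b * Ser d n a))
          + (Ser d n (b*a) - Ser d n b * Ser d n a) * (Ser d n x * (Ser d n a * Ser d n b))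
          + (Ser d n a * (Ser d n b * Ser d n x)) * (Ser d n (b*a) - Ser d n b * Ser d n a)
          + (Ser d n b * (Ser d n a * Ser d n x)) * (Ser d n (a*b) - Ser d n a * Ser d n b)
          + (Ser d n (a*b) - Ser d n a * Ser d n b) * (Ser d n x * (Ser d n (b*a) - Ser d n b * Ser d n a))
          + (Ser d n (b*a) - Ser d n b * Ser d n a) * (Ser d n x * (Ser d n (a*b) - Ser d n a * Ser d n b)))
        0 := by
      have e0 : (Ser d n (a*b) - Ser d n a * Ser d n b) * (Ser d n x * (Ser d n b * Ser d n a))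
          + (Ser d n (b*a) - Ser d n b * Ser d n a) * (Ser d n x * (Ser d n a * Ser d n b))
          + (Ser d n a * (Ser d n b * Ser d n x)) * (Ser d n (b*a) - Ser d n b * Ser d n a)
          + (Ser d n b * (Ser d n a * Ser d n x)) * (Ser d n (a*b) - Ser d n a * Ser d n b)
          + (Ser d n (a*b) - Ser d n a * Ser d n b) * (Ser d n x * (Ser d n (b*a) - Ser d n b * Ser d n a))
          + (Ser d n (b*a) - Ser d n b * Ser d n a) * (Ser d n x * (Ser d n (a*b) - Ser d n a * Ser d n b))
          = ((Ser d n a * Ser d n b + (Ser d n (a*b) - Ser d n a * Ser d n b)) * Ser d n x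
              * (Ser d n b * Ser d n a + (Ser d n (b*a) - Ser d n b * Ser d n a))
            + (Ser d n b * Ser d n a + (Ser d n (b*a) - Ser d n b * Ser d n a)) * Ser d n x
              * (Ser d n a * Ser d n b + (Ser d n (a*b) - Ser d n a * Ser d n b)))
            - (Ser d n a * (Ser d n b * Ser d n x * Ser d n b) * Ser d n a
              + Ser d n b * (Ser d n a * Ser d n x * Ser d n a) * Ser d n b) := by
        noncomm_ring
      rw [e0]
      refine (main.sub MD.rfl).trans (MD.of_eq (sub_self _))
    -- extract coefficient n
    have hq : ∀ u v : A, (Ser d n x * (Ser d n (u*v) - Ser d n u * Ser d n v)).coeff 0 = 0 := by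
      intro u v
      simp [Polynomial.mul_coeff_zero, Polynomial.coeff_sub, hθ0]
    have hc := junk n (Nat.lt_succ_self n)
    simp only [Polynomial.coeff_add, Polynomial.coeff_zero] at hc
    rw [extract_left (hlow a b) _, extract_left (hlow b a) _,
        extract_right (hlow b a) _, extract_right (hlow a b) _,
        extract_left (hlow a b) _, extract_left (hlow b a) _] at hc
    rw [hcoe a b, hcoe b a, hq b a, hq a b, mul_zero, mul_zero] at hc
    simp only [Polynomial.mul_coeff_zero, hθ0] at hc
    have heba : Edef d n b a = -Edef d n a b := eq_neg_of_add_eq_zero_right (hskew a b)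
    rw [heba] at hc
    show Edef d n a b * x * (a*b - b*a) + (a*b - b*a) * x * Edef d n a b = 0
    linear_combination (norm := noncomm_ring) -hc
  -- Brešar chain
  obtain ⟨kill, killf, central⟩ := bresar_chain K hsp (Edef d n) haddl haddr hkey
  -- endgame
  intro a b
  have hE : Edef d n a b = 0 := by
    set g := Edef d n a b with hgdef
    have gcomm : ∀ c t : A, g * (c*t - t*c) = 0 := by
      intro c t
      have h := kill a b c t 1
      rw [mul_one] at h
      exact h
    have gcf : ∀ c t : A, (c*t - t*c) * g = 0 := by
      intro c t
      have h := killf a b c t 1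
      rw [mul_one] at h
      exact h
    have gcen : ∀ y : A, g * y = y * g := central a b
    -- c7 : g + g = d n (ab - ba) - ∑ (commutator terms)
    have c7 : g + g = d n (a*b - b*a)
        - ∑ k ∈ range (n+1), (d (n-k) a * d k b - d k b * d (n-k) a) := by
      have heba : Edef d n b a = -g := eq_neg_of_add_eq_zero_right (hskew a b)
      have e1 : g + g = Edef d n a b - Edef d n b a := by rw [heba, hgdef]; abel
      rw [e1, Edef, Edef, map_sub]
      have href : ∑ k ∈ range (n+1), d (n-k) b * d k a
          = ∑ k ∈ range (n+1), d k b * d (n-k) a :=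
        (sum_reflect' (fun k j => d k b * d j a) n).symm
      rw [href, Finset.sum_sub_distrib]
      abel
    have gS : g * (∑ k ∈ range (n+1), (d (n-k) a * d k b - d k b * d (n-k) a)) = 0 := by
      rw [Finset.mul_sum]
      exact Finset.sum_eq_zero fun k _ => gcomm _ _
    set w := a*b - b*a with hw
    have hg2 : g*g + g*g = g * d n w := by
      have := congrArg (fun y => g * y) c7
      rw [mul_add, mul_sub, gS, sub_zero] at this
      exact this
    -- kill lower terms
    have kd : ∀ k, k < n → g * d k w = 0 ∧ d k w * g = 0 := by
      intro k hk
      have hdk : d k w = ∑ j ∈ range (k+1), (d (k-j) a * d j b - d j b * d (k-j) a) := by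
        rw [hw, map_sub, HG k hk a b, HG k hk b a]
        have href : ∑ j ∈ range (k+1), d (k-j) b * d j a
            = ∑ j ∈ range (k+1), d j b * d (k-j) a :=
          (sum_reflect' (fun i j => d i b * d j a) k).symm
        rw [href, Finset.sum_sub_distrib]
      constructor
      · rw [hdk, Finset.mul_sum]
        exact Finset.sum_eq_zero fun j _ => gcomm _ _
      · rw [hdk, Finset.sum_mul]
        exact Finset.sum_eq_zero fun j _ => gcf _ _
    -- Jordan identity at level n applied to (g, w)
    have gw : g * w = 0 := gcomm a b
    have wg : w * g = 0 := gcf a b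
    have hJn := HJ n le_rfl g w
    rw [gw, wg, add_zero, map_zero] at hJn
    -- multiply by g on the left
    have hmul := congrArg (fun y => g * y) hJn.symm
    rw [mul_zero, Finset.mul_sum] at hmul
    -- evaluate the sum : only k = n survives
    have hsum : ∑ k ∈ range (n+1), g * (d (n-k) g * d k w + d k w * d (n-k) g)
        = g * (g * d n w) + g * (d n w * g) := by
      rw [Finset.sum_eq_single n (fun k hk hkn => by
        have hklt : k < n := by rw [Finset.mem_range] at hk; omega
        have h1 : g * (d (n-k) g * d k w) = d (n-k) g * (g * d k w) := by
          rw [← mul_assoc, gcen (d (n-k) g), mul_assoc]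
        rw [mul_add, h1, (kd k hklt).1, mul_zero, ← mul_assoc, (kd k hklt).1, zero_mul]
        simp)
        (fun h => absurd (Finset.self_mem_range_succ n) h)]
      rw [Nat.sub_self, hd0', mul_add]
    rw [hsum] at hmul
    have hflip : g * (d n w * g) = g * (g * d n w) := by rw [← gcen (d n w)]
    have hmul2 : g * (g * d n w) + g * (g * d n w) = 0 := by
      nth_rewrite 2 [← hflip]; exact hmul
    have hgg : g * (g * d n w) = 0 := two_smul_cancel K hmul2
    -- g^3 = 0
    have hg3 : g * (g * g) = 0 := by
      have hc2 := congrArg (fun y => g * y) hg2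
      rw [mul_add, hgg] at hc2
      exact two_smul_cancel K hc2
    have move : ∀ y : A, g * g * y = y * (g * g) := by
      intro y
      calc g * g * y = g * (g * y) := mul_assoc g g y
        _ = g * (y * g) := by rw [gcen y]
        _ = (g * y) * g := (mul_assoc g y g).symm
        _ = (y * g) * g := by rw [gcen y]
        _ = y * (g * g) := mul_assoc y g g
    have hg2z : g * g = 0 := by
      apply hsp
      intro x
      rw [move x, mul_assoc, mul_assoc g g (g*g), hg3, mul_zero, mul_zero]
    apply hsp
    intro x
    rw [mul_assoc, ← gcen x, ← mul_assoc, hg2z, zero_mul]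
  rw [Edef, sub_eq_zero] at hE
  exact hE

end SubD2
section SumHelpers
open Finset
variable {M : Type*} [AddCommMonoid M]

lemma sum_split_ends (F : ℕ → M) (n : ℕ) (hn : 1 ≤ n)
    (hmid : ∀ k, 1 ≤ k → k < n → F k = 0) :
    ∑ k ∈ range (n+1), F k = F 0 + F n := by
  obtain ⟨m, rfl⟩ : ∃ m, n = m+1 := ⟨n-1, by omega⟩
  rw [Finset.sum_range_succ, Finset.sum_range_succ']
  have hz : ∑ k ∈ range m, F (k+1) = 0 :=
    Finset.sum_eq_zero fun k hk => hmid (k+1) (by omega) (by rw [Finset.mem_range] at hk; omega)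
  rw [hz, zero_add]

lemma tri_sum (n : ℕ) (G : ℕ → ℕ → M) :
    ∑ k ∈ range n, ∑ j ∈ range (n - k), G j k
      = ∑ s ∈ range n, ∑ k ∈ range (s+1), G (s - k) k := by
  rw [Finset.sum_sigma', Finset.sum_sigma']
  refine Finset.sum_nbij' (fun p => ⟨p.2 + p.1, p.1⟩) (fun p => ⟨p.2, p.1 - p.2⟩) ?_ ?_ ?_ ?_ ?_
  · rintro ⟨k, j⟩ hp
    simp only [Finset.mem_sigma, Finset.mem_range] at hp ⊢
    omega
  · rintro ⟨s, k⟩ hp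
    simp only [Finset.mem_sigma, Finset.mem_range] at hp ⊢
    omega
  · rintro ⟨k, j⟩ hp
    simp only [Finset.mem_sigma, Finset.mem_range] at hp
    dsimp only
    rw [show j + k - k = j by omega]
  · rintro ⟨s, k⟩ hp
    simp only [Finset.mem_sigma, Finset.mem_range] at hp
    dsimp only
    rw [show s - k + k = s by omega]
  · rintro ⟨k, j⟩ hp
    simp only [Finset.mem_sigma, Finset.mem_range] at hp
    simp only
    rw [show j + k - k = j by omega]

lemma tri_swap (n : ℕ) (G : ℕ → ℕ → M) :
    ∑ k ∈ range (n+1), ∑ i ∈ range (k+1), G k i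
      = ∑ j ∈ range (n+1), ∑ i ∈ range (j+1), G (n - j + i) i := by
  rw [Finset.sum_sigma', Finset.sum_sigma']
  refine Finset.sum_nbij' (fun p => ⟨n - p.1 + p.2, p.2⟩) (fun p => ⟨n - p.1 + p.2, p.2⟩) ?_ ?_ ?_ ?_ ?_
  · rintro ⟨k, i⟩ hp
    simp only [Finset.mem_sigma, Finset.mem_range] at hp ⊢
    omega
  · rintro ⟨j, i⟩ hp
    simp only [Finset.mem_sigma, Finset.mem_range] at hp ⊢
    omega
  · rintro ⟨k, i⟩ hp
    simp only [Finset.mem_sigma, Finset.mem_range] at hp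
    dsimp only
    rw [show n - (n - k + i) + i = k by omega]
  · rintro ⟨j, i⟩ hp
    simp only [Finset.mem_sigma, Finset.mem_range] at hp
    dsimp only
    rw [show n - (n - j + i) + i = j by omega]
  · rintro ⟨k, i⟩ hp
    simp only [Finset.mem_sigma, Finset.mem_range] at hp
    simp only
    rw [show n - (n - k + i) + i = k by omega]

end SumHelpers
section Main
open Finset
variable {K A : Type*} [Field K] [CharZero K] [Ring A] [Algebra K A]

/-- the inductive structure statement -/
def Sprop (f d : ℕ → Module.End K A) (n : ℕ) : Prop :=
  (1 ≤ n → d n 1 = 0) ∧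
  (∀ y : A, f n 1 * y = y * f n 1) ∧
  (∀ a b : A, d n (a*b) = ∑ k ∈ Finset.range (n+1), d (n-k) a * d k b) ∧
  (∀ a : A, f n a = ∑ k ∈ Finset.range (n+1), f (n-k) 1 * d k a)

lemma Smain (hsp : ∀ a : A, (∀ x : A, a * x * a = 0) → a = 0)
    (f d : ℕ → Module.End K A) (hf0 : f 0 = 1) (hd0 : d 0 = 1)
    (hgen : ∀ (n : ℕ) (a b : A),
      f n (a * b + b * a) =
        ∑ k ∈ Finset.range (n + 1), (f (n - k) a * d k b + d k b * f (n - k) a)) :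
    ∀ n, Sprop f d n := by
  have hf0' : ∀ a : A, f 0 a = a := fun a => by rw [hf0]; rfl
  have hd0' : ∀ a : A, d 0 a = a := fun a => by rw [hd0]; rfl
  intro n
  induction n using Nat.strong_induction_on with
  | _ n IH =>
  rcases Nat.eq_zero_or_pos n with h0 | hn
  · subst h0
    refine ⟨fun h => by omega, ?_, ?_, ?_⟩
    · intro y; rw [hf0' 1, one_mul, mul_one]
    · intro a b
      rw [Finset.sum_range_one, Nat.sub_zero, hd0', hd0', hd0']
    · intro a
      rw [Finset.sum_range_one, Nat.sub_zero, hf0' 1, hd0', one_mul, hf0']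
  -- n ≥ 1 : write n = m + 1
  obtain ⟨m, rfl⟩ : ∃ m, n = m + 1 := ⟨n - 1, by omega⟩
  have hd1m : ∀ k, 1 ≤ k → k < m+1 → d k 1 = 0 := fun k h1 h2 => (IH k h2).1 h1
  have hcent : ∀ k, k < m+1 → ∀ y : A, f k 1 * y = y * f k 1 := fun k h2 => (IH k h2).2.1
  have hdgen : ∀ k, k < m+1 → ∀ a b : A,
      d k (a*b) = ∑ j ∈ range (k+1), d (k-j) a * d j b := fun k h2 => (IH k h2).2.2.1
  have hfst : ∀ k, k < m+1 → ∀ a : A,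
      f k a = ∑ j ∈ range (k+1), f (k-j) 1 * d j a := fun k h2 => (IH k h2).2.2.2
  -- move a central (lower) constant across
  have cmove : ∀ k, k < m+1 → ∀ u v : A, v * (f k 1 * u) = f k 1 * (v * u) := by
    intro k hk u v
    rw [← mul_assoc, ← hcent k hk v, mul_assoc]
  -- (a) d (m+1) 1 = 0
  have hdn1 : d (m+1) 1 = 0 := by
    have key : ∀ a : A, a * d (m+1) 1 + d (m+1) 1 * a = 0 := by
      intro a
      have h := hgen (m+1) a 1
      rw [mul_one, one_mul, map_add] at h
      have hsplit : ∑ k ∈ range (m+1+1), (f (m+1-k) a * d k 1 + d k 1 * f (m+1-k) a)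
          = (f (m+1) a * d 0 1 + d 0 1 * f (m+1) a)
            + (f 0 a * d (m+1) 1 + d (m+1) 1 * f 0 a) := by
        refine (sum_split_ends _ (m+1) (by omega) (fun k h1 h2 => ?_)).trans ?_
        · rw [hd1m k h1 h2, mul_zero, zero_mul, add_zero]
        · rw [Nat.sub_self, Nat.sub_zero]
      rw [hsplit, hd0' 1, hf0', mul_one, one_mul] at h
      linear_combination (norm := noncomm_ring) -h
    have h1 := key 1
    rw [one_mul, mul_one] at h1
    exact two_smul_cancel K h1
  -- symmetrized lower Leibniz rule
  have hWlow : ∀ k, k < m+1 → ∀ x y : A, d k (x*y + y*x)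
      = ∑ j ∈ range (k+1), (d (k-j) x * d j y + d j y * d (k-j) x) := by
    intro k hk x y
    rw [map_add, hdgen k hk x y, hdgen k hk y x]
    have h1 : ∑ j ∈ range (k+1), d (k-j) y * d j x
        = ∑ j ∈ range (k+1), d j y * d (k-j) x :=
      (sum_reflect' (fun i j => d i y * d j x) k).symm
    rw [h1, ← Finset.sum_add_distrib]
  -- (b) : 2 f = q∘ + 2(U + d (m+1))
  have hb : ∀ y : A, f (m+1) y + f (m+1) y
      = (f (m+1) 1 * y + y * f (m+1) 1)
        + (((∑ k ∈ range m, f (m-k) 1 * d (k+1) y) + d (m+1) y)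
          + ((∑ k ∈ range m, f (m-k) 1 * d (k+1) y) + d (m+1) y)) := by
    intro y
    have h := hgen (m+1) 1 y
    rw [one_mul, mul_one, map_add] at h
    rw [Finset.sum_range_succ'] at h
    -- h : f y + f y = (∑ k ∈ range (m+1), F (k+1)) + F 0
    have hF0 : f (m+1-0) 1 * d 0 y + d 0 y * f (m+1-0) 1
        = f (m+1) 1 * y + y * f (m+1) 1 := by rw [Nat.sub_zero, hd0']
    rw [hF0] at h
    have hmid : ∑ k ∈ range (m+1), (f (m+1-(k+1)) 1 * d (k+1) y + d (k+1) y * f (m+1-(k+1)) 1)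
        = ((∑ k ∈ range m, f (m-k) 1 * d (k+1) y) + d (m+1) y)
          + ((∑ k ∈ range m, f (m-k) 1 * d (k+1) y) + d (m+1) y) := by
      have step : ∀ k ∈ range (m+1),
          f (m+1-(k+1)) 1 * d (k+1) y + d (k+1) y * f (m+1-(k+1)) 1
          = f (m-k) 1 * d (k+1) y + f (m-k) 1 * d (k+1) y := by
        intro k hk
        rw [Finset.mem_range] at hk
        rw [show m+1-(k+1) = m-k by omega]
        rw [← hcent (m-k) (by omega) (d (k+1) y)]
      rw [Finset.sum_congr rfl step, Finset.sum_add_distrib]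
      -- now each half : ∑ k ∈ range (m+1), f (m-k) 1 * d (k+1) y = (∑ k ∈ range m, ...) + d (m+1) y
      have half : ∑ k ∈ range (m+1), f (m-k) 1 * d (k+1) y
          = (∑ k ∈ range m, f (m-k) 1 * d (k+1) y) + d (m+1) y := by
        rw [Finset.sum_range_succ, Nat.sub_self, hf0', one_mul]
      rw [half]
    rw [hmid] at h
    linear_combination (norm := noncomm_ring) h
  -- (c) : hgen at level m+1 reduces to the commutator identity
  have hDelta : ∀ x y : A,
      (d (m+1) (x*y + y*x)
        - ∑ k ∈ range (m+1+1), (d (m+1-k) x * d k y + d k y * d (m+1-k) x))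
      + (d (m+1) (x*y + y*x)
        - ∑ k ∈ range (m+1+1), (d (m+1-k) x * d k y + d k y * d (m+1-k) x))
      = x*(f (m+1) 1 * y - y * f (m+1) 1) - (f (m+1) 1 * y - y * f (m+1) 1)*x := by
    intro x y
    have h := hgen (m+1) x y
    rw [Finset.sum_range_succ', Nat.sub_zero, hd0'] at h
    have E5 : ∀ k ∈ range (m+1),
        f (m+1-(k+1)) x * d (k+1) y + d (k+1) y * f (m+1-(k+1)) x
        = ∑ j ∈ range (m+1-k), f (m-k-j) 1 * (d j x * d (k+1) y + d (k+1) y * d j x) := by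
      intro k hk
      rw [Finset.mem_range] at hk
      rw [show m+1-(k+1) = m-k by omega]
      rw [hfst (m-k) (by omega) x, Finset.sum_mul, Finset.mul_sum]
      rw [show m-k+1 = m+1-k by omega]
      rw [← Finset.sum_add_distrib]
      refine Finset.sum_congr rfl fun j hj => ?_
      rw [Finset.mem_range] at hj
      rw [mul_assoc, cmove (m-k-j) (by omega), mul_add]
    rw [Finset.sum_congr rfl E5] at h
    have E6 : ∑ k ∈ range (m+1), ∑ j ∈ range (m+1-k),
          f (m-k-j) 1 * (d j x * d (k+1) y + d (k+1) y * d j x)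
        = ∑ s ∈ range (m+1), ∑ k ∈ range (s+1),
          f (m-s) 1 * (d (s-k) x * d (k+1) y + d (k+1) y * d (s-k) x) := by
      rw [tri_sum (m+1) (fun j k => f (m-k-j) 1 * (d j x * d (k+1) y + d (k+1) y * d j x))]
      refine Finset.sum_congr rfl fun s hs => Finset.sum_congr rfl fun k hk => ?_
      rw [Finset.mem_range] at hs hk
      rw [show m - k - (s-k) = m - s by omega]
    rw [E6] at h
    have E7 : ∀ s ∈ range (m+1), ∑ k ∈ range (s+1),
          f (m-s) 1 * (d (s-k) x * d (k+1) y + d (k+1) y * d (s-k) x)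
        = f (m-s) 1 * ((∑ k ∈ range (s+1+1), (d (s+1-k) x * d k y + d k y * d (s+1-k) x))
            - (d (s+1) x * y + y * d (s+1) x)) := by
      intro s hs
      rw [← Finset.mul_sum]
      congr 1
      conv_rhs => rw [Finset.sum_range_succ']
      rw [Nat.sub_zero, hd0', add_sub_cancel_right]
      exact (Finset.sum_congr rfl fun k hk => by
        rw [show s+1-(k+1) = s - k by omega]).symm
    rw [Finset.sum_congr rfl E7] at h
    rw [Finset.sum_range_succ
      (fun s => f (m-s) 1 * ((∑ k ∈ range (s+1+1), (d (s+1-k) x * d k y + d k y * d (s+1-k) x))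
        - (d (s+1) x * y + y * d (s+1) x))) m] at h
    rw [Nat.sub_self, hf0', one_mul] at h
    have E9 : ∑ s ∈ range m, f (m-s) 1
          * ((∑ k ∈ range (s+1+1), (d (s+1-k) x * d k y + d k y * d (s+1-k) x))
            - (d (s+1) x * y + y * d (s+1) x))
        = (∑ s ∈ range m, f (m-s) 1
            * (∑ k ∈ range (s+1+1), (d (s+1-k) x * d k y + d k y * d (s+1-k) x)))
          - (∑ s ∈ range m, f (m-s) 1 * (d (s+1) x * y + y * d (s+1) x)) := by
      rw [← Finset.sum_sub_distrib]
      exact Finset.sum_congr rfl fun s hs => mul_sub _ _ _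
    rw [E9] at h
    -- LHS side
    have hbxy := hb (x*y + y*x)
    have E3 : ∑ k ∈ range m, f (m-k) 1 * d (k+1) (x*y + y*x)
        = ∑ s ∈ range m, f (m-s) 1
          * (∑ k ∈ range (s+1+1), (d (s+1-k) x * d k y + d k y * d (s+1-k) x)) := by
      refine Finset.sum_congr rfl fun k hk => ?_
      rw [Finset.mem_range] at hk
      rw [hWlow (k+1) (by omega) x y]
    rw [E3] at hbxy
    have hbx := hb x
    have E10 : (∑ k ∈ range m, f (m-k) 1 * d (k+1) x) * y
          + y * (∑ k ∈ range m, f (m-k) 1 * d (k+1) x)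
        = ∑ s ∈ range m, f (m-s) 1 * (d (s+1) x * y + y * d (s+1) x) := by
      rw [Finset.sum_mul, Finset.mul_sum, ← Finset.sum_add_distrib]
      refine Finset.sum_congr rfl fun k hk => ?_
      rw [Finset.mem_range] at hk
      rw [mul_assoc, cmove (m-k) (by omega), ← mul_add]
    linear_combination (norm := noncomm_ring) 2*h - hbxy + hbx * y + y * hbx + 2*E10
  -- (d) : the constant f (m+1) 1 is central
  have Wsymm : ∀ x y : A,
      ∑ k ∈ range (m+1+1), (d (m+1-k) x * d k y + d k y * d (m+1-k) x)
      = ∑ k ∈ range (m+1+1), (d (m+1-k) y * d k x + d k x * d (m+1-k) y) := by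
    intro x y
    have h := sum_reflect' (fun i j => d j x * d i y + d i y * d j x) (m+1)
    -- h : Σ g k (m+1-k) = Σ g (m+1-k) k
    refine h.trans ?_
    refine Finset.sum_congr rfl fun k hk => ?_
    exact add_comm _ _
  have hq : ∀ u v : A, f (m+1) 1 * (u*v - v*u) = (u*v - v*u) * f (m+1) 1 := by
    intro u v
    have h1 := hDelta u v
    have h2 := hDelta v u
    have hL : d (m+1) (u*v + v*u) = d (m+1) (v*u + u*v) := by rw [add_comm (u*v) (v*u)]
    rw [hL, Wsymm u v] at h1
    -- now h1 and h2 have identical LHS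
    rw [h1] at h2
    linear_combination (norm := noncomm_ring) h2
  have hqc : ∀ y : A, f (m+1) 1 * y = y * f (m+1) 1 := sp_central hsp hq
  -- Jordan rule at level m+1 for d
  have hJn : ∀ x y : A, d (m+1) (x*y + y*x)
      = ∑ k ∈ range (m+1+1), (d (m+1-k) x * d k y + d k y * d (m+1-k) x) := by
    intro x y
    have h := hDelta x y
    rw [hqc y, sub_self, mul_zero, zero_mul, sub_self] at h
    have := two_smul_cancel K h
    rwa [sub_eq_zero] at this
  have HJ : ∀ k, k ≤ m+1 → ∀ x y : A, d k (x*y + y*x)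
      = ∑ j ∈ range (k+1), (d (k-j) x * d j y + d j y * d (k-j) x) := by
    intro k hk
    rcases Nat.lt_or_ge k (m+1) with h | h
    · exact hWlow k h
    · have hkm : k = m+1 := by omega
      subst hkm
      exact hJn
  have hDg : ∀ a b : A, d (m+1) (a*b) = ∑ k ∈ range (m+1+1), d (m+1-k) a * d k b :=
    subD hsp d (m+1) hd0' (by omega) HJ hdgen
  refine ⟨fun _ => hdn1, hqc, hDg, ?_⟩
  -- f-structure at m+1
  intro a
  have h := hb a
  have target : ∑ k ∈ range (m+1+1), f (m+1-k) 1 * d k a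
      = f (m+1) 1 * a + ((∑ k ∈ range m, f (m-k) 1 * d (k+1) a) + d (m+1) a) := by
    rw [Finset.sum_range_succ', Nat.sub_zero, hd0']
    have e : ∀ k ∈ range (m+1), f (m+1-(k+1)) 1 * d (k+1) a = f (m-k) 1 * d (k+1) a := by
      intro k hk; rw [show m+1-(k+1) = m-k by omega]
    rw [Finset.sum_congr rfl e, Finset.sum_range_succ, Nat.sub_self, hf0', one_mul]
    abel
  rw [target]
  have h2 : (f (m+1) a - (f (m+1) 1 * a
        + ((∑ k ∈ range m, f (m-k) 1 * d (k+1) a) + d (m+1) a)))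
      + (f (m+1) a - (f (m+1) 1 * a
        + ((∑ k ∈ range m, f (m-k) 1 * d (k+1) a) + d (m+1) a))) = 0 := by
    have hc := hqc a
    linear_combination (norm := noncomm_ring) h - hc
  have h3 := two_smul_cancel K h2
  rwa [sub_eq_zero] at h3

end Main
/-- On a semiprime algebra, every Jordan higher generalized derivation `{fₙ}` (associated
with `{dₙ}`, with `f₀ = d₀ = I`) is a higher `{fₙ, dₙ}`-derivation. -/
theorem jordan_higher_generalized_derivation_is_higher
    {K A : Type*} [Field K] [CharZero K] [Ring A] [Algebra K A]
    (hsemiprime : ∀ a : A, (∀ x : A, a * x * a = 0) → a = 0)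
    (f d : ℕ → Module.End K A)
    (hf0 : f 0 = 1) (hd0 : d 0 = 1)
    (hgen : ∀ (n : ℕ) (a b : A),
      f n (a * b + b * a) =
        ∑ k ∈ Finset.range (n + 1), (f (n - k) a * d k b + d k b * f (n - k) a)) :
    ∀ (n : ℕ) (a b : A),
      f n (a * b) = ∑ k ∈ Finset.range (n + 1), f (n - k) a * d k b ∧
      f n (a * b) = ∑ k ∈ Finset.range (n + 1), d (n - k) a * f k b := by
  classical
  have hS := Smain hsemiprime f d hf0 hd0 hgen
  have hcent : ∀ m : ℕ, ∀ y : A, f m 1 * y = y * f m 1 := fun m => (hS m).2.1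
  have hdgen : ∀ m : ℕ, ∀ a b : A,
      d m (a*b) = ∑ k ∈ Finset.range (m+1), d (m-k) a * d k b := fun m => (hS m).2.2.1
  have hfst : ∀ m : ℕ, ∀ a : A,
      f m a = ∑ k ∈ Finset.range (m+1), f (m-k) 1 * d k a := fun m => (hS m).2.2.2
  have cmove : ∀ (k : ℕ) (u v : A), v * (f k 1 * u) = f k 1 * (v * u) := by
    intro k u v
    rw [← mul_assoc, ← hcent k v, mul_assoc]
  intro n a b
  -- common LHS expansion : f n (ab) = ∑_{j≤n} ∑_{i≤j} c_{n-j} (d_{j-i} a · d_i b)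
  have hLHS : f n (a*b)
      = ∑ j ∈ Finset.range (n+1), ∑ i ∈ Finset.range (j+1),
          f (n-j) 1 * (d (j-i) a * d i b) := by
    rw [hfst n (a*b)]
    refine Finset.sum_congr rfl fun j hj => ?_
    rw [hdgen j a b, Finset.mul_sum]
  constructor
  · -- goal 1
    rw [hLHS]
    have hRHS : ∑ k ∈ Finset.range (n+1), f (n-k) a * d k b
        = ∑ k ∈ Finset.range (n+1), ∑ i ∈ Finset.range (n+1-k),
            f (n-k-i) 1 * (d i a * d k b) := by
      refine Finset.sum_congr rfl fun k hk => ?_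
      rw [Finset.mem_range] at hk
      rw [hfst (n-k) a, Finset.sum_mul, show n-k+1 = n+1-k by omega]
      exact Finset.sum_congr rfl fun i hi => by rw [mul_assoc]
    rw [hRHS]
    rw [tri_sum (n+1) (fun i k => f (n-k-i) 1 * (d i a * d k b))]
    refine Finset.sum_congr rfl fun s hs => Finset.sum_congr rfl fun k hk => ?_
    rw [Finset.mem_range] at hs hk
    rw [show n - k - (s - k) = n - s by omega]
  · -- goal 2
    rw [hLHS]
    have hRHS : ∑ k ∈ Finset.range (n+1), d (n-k) a * f k b
        = ∑ k ∈ Finset.range (n+1), ∑ i ∈ Finset.range (k+1),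
            f (k-i) 1 * (d (n-k) a * d i b) := by
      refine Finset.sum_congr rfl fun k hk => ?_
      rw [hfst k b, Finset.mul_sum]
      exact Finset.sum_congr rfl fun i hi => by
        rw [cmove (k-i) (d i b) (d (n-k) a)]
    rw [hRHS]
    rw [tri_swap n (fun k i => f (k-i) 1 * (d (n-k) a * d i b))]
    refine Finset.sum_congr rfl fun j hj => Finset.sum_congr rfl fun i hi => ?_
    rw [Finset.mem_range] at hj hi
    rw [show n - j + i - i = n - j by omega, show n - (n - j + i) = j - i by omega]
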